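/- arXiv:2004.06852 — 9 statements merged into one kernel-verified Lean document; each statement's English description precedes it below -/
import Mathlib

section
/- Let f : I → ℝ be differentiable on the interval I and strongly η-convex with respect to η and modulus c ≥ 0. If x ∈ I is a global minimum of f on I, then for every y ∈ I with f'(x)·(y − x) ≥ 0 one has η(f(y), f(x)) ≥ c·(y − x)². -/
theorem stmt_5 (I : Set ℝ) (hI : Convex ℝ I) (c : ℝ) (hc : 0 ≤ c)
    (f f' : ℝ → ℝ) (η : ℝ → ℝ → ℝ)
    (hdiff : ∀ x ∈ I, HasDerivAt f (f' x) x)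
    (hf : ∀ x ∈ I, ∀ y ∈ I, ∀ t ∈ Set.Icc (0:ℝ) 1,
      f (t * x + (1 - t) * y) ≤ f y + t * η (f x) (f y) - c * t * (1 - t) * (x - y)^2)
    (x : ℝ) (hx : x ∈ I) (hmin : ∀ y ∈ I, f x ≤ f y) :
    ∀ y ∈ I, f' x * (y - x) ≥ 0 → η (f y) (f x) ≥ c * (y - x)^2 := by
  intro y hy _
  have key : ∀ t ∈ Set.Ioc (0:ℝ) 1, c * (1 - t) * (y - x)^2 ≤ η (f y) (f x) := by
    intro t ht
    have ht0 : 0 < t := ht.1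
    have hmem : t * y + (1 - t) * x ∈ I := by
      exact hI hy hx (le_of_lt ht0) (by linarith [ht.2] : (0:ℝ) ≤ 1 - t)
        (by ring : t + (1 - t) = 1)
    have h1 := hf y hy x hx t ⟨le_of_lt ht0, ht.2⟩
    have h2 := hmin _ hmem
    have : 0 ≤ t * η (f y) (f x) - c * t * (1 - t) * (y - x)^2 := by nlinarith
    nlinarith
  have htend : Filter.Tendsto (fun t : ℝ => c * (1 - t) * (y - x)^2)
      (nhdsWithin 0 (Set.Ioi 0)) (nhds (c * (1 - 0) * (y - x)^2)) := by
    have hcont : Continuous fun t : ℝ => c * (1 - t) * (y - x)^2 := by continuity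
    exact (hcont.tendsto 0).mono_left nhdsWithin_le_nhds
  have hle : c * (1 - 0) * (y - x)^2 ≤ η (f y) (f x) := by
    refine le_of_tendsto htend ?_
    filter_upwards [Ioc_mem_nhdsGT_of_mem (Set.mem_Ico.mpr ⟨le_refl 0, one_pos⟩)] with t ht
    exact key t ht
  simpa using hle
end

section
/- Let f : I → ℝ be differentiable on the interval I and strongly η-convex with respect to η and modulus c ≥ 0. Then for all x, y ∈ I: f'(x)·(y − x) ≤ η(f(y), f(x)) − c·(y − x)². -/
theorem stmt_6 (I : Set ℝ) (hI : Convex ℝ I) (c : ℝ) (hc : 0 ≤ c)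
    (f f' : ℝ → ℝ) (η : ℝ → ℝ → ℝ)
    (hdiff : ∀ x ∈ I, HasDerivAt f (f' x) x)
    (hf : ∀ x ∈ I, ∀ y ∈ I, ∀ t ∈ Set.Icc (0:ℝ) 1,
      f (t * x + (1 - t) * y) ≤ f y + t * η (f x) (f y) - c * t * (1 - t) * (x - y)^2) :
    ∀ x ∈ I, ∀ y ∈ I, f' x * (y - x) ≤ η (f y) (f x) - c * (y - x)^2 := by
  intro x hx y hy
  have hg : HasDerivAt (fun t : ℝ => x + t * (y - x)) (y - x) 0 := by
    simpa using ((hasDerivAt_id (0:ℝ)).mul_const (y - x)).const_add x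
  have h2 : HasDerivAt f (f' x) ((fun t : ℝ => x + t * (y - x)) 0) := by
    simpa using hdiff x hx
  have hh : HasDerivAt (f ∘ fun t : ℝ => x + t * (y - x)) (f' x * (y - x)) 0 := h2.comp 0 hg
  rw [hasDerivAt_iff_tendsto_slope] at hh
  have l1 : Filter.Tendsto (slope (f ∘ fun t : ℝ => x + t * (y - x)) 0)
      (nhdsWithin 0 (Set.Ioi 0)) (nhds (f' x * (y - x))) :=
    hh.mono_left (nhdsWithin_mono _ (fun t ht => ne_of_gt ht))
  have l2 : Filter.Tendsto (fun t : ℝ => η (f y) (f x) - c * (1 - t) * (y - x) ^ 2)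
      (nhdsWithin 0 (Set.Ioi 0)) (nhds (η (f y) (f x) - c * (y - x) ^ 2)) := by
    have hcont : Continuous fun t : ℝ => η (f y) (f x) - c * (1 - t) * (y - x) ^ 2 := by
      continuity
    have h3 : Filter.Tendsto (fun t : ℝ => η (f y) (f x) - c * (1 - t) * (y - x) ^ 2)
        (nhdsWithin 0 (Set.Ioi 0)) (nhds (η (f y) (f x) - c * (1 - 0) * (y - x) ^ 2)) :=
      (hcont.tendsto 0).mono_left nhdsWithin_le_nhds
    simpa using h3
  have hev : ∀ᶠ t in nhdsWithin (0:ℝ) (Set.Ioi 0),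
      slope (f ∘ fun t : ℝ => x + t * (y - x)) 0 t ≤
        η (f y) (f x) - c * (1 - t) * (y - x) ^ 2 := by
    filter_upwards [Ioo_mem_nhdsGT_of_mem (Set.mem_Ico.mpr ⟨le_refl 0, zero_lt_one⟩)]
      with t ht
    have ht0 : (0:ℝ) < t := ht.1
    have key := hf y hy x hx t ⟨le_of_lt ht0, le_of_lt ht.2⟩
    have heq : t * y + (1 - t) * x = x + t * (y - x) := by ring
    rw [heq] at key
    have heq0 : x + (0:ℝ) * (y - x) = x := by ring
    simp only [slope_def_field, Function.comp_apply, heq0, sub_zero, div_eq_mul_inv]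
    rw [mul_inv_le_iff₀ ht0]
    nlinarith [key]
  exact le_of_tendsto_of_tendsto l1 l2 hev
end

section
/- Let a < b, c ≥ 0, and let f : [a,b] → ℝ be continuous and strongly η-convex with respect to η and modulus c. If η(u, v) ≤ M for all u, v ∈ f([a,b]), then f((a+b)/2) − M/2 ≤ (1/(b−a)) ∫_a^b f(x) dx − (c/12)·(b−a)². -/
theorem stmt_7 (a b c M : ℝ) (hab : a < b) (hc : 0 ≤ c)
    (f : ℝ → ℝ) (η : ℝ → ℝ → ℝ)
    (hcont : ContinuousOn f (Set.Icc a b))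
    (hf : ∀ x ∈ Set.Icc a b, ∀ y ∈ Set.Icc a b, ∀ t ∈ Set.Icc (0:ℝ) 1,
      f (t * x + (1 - t) * y) ≤ f y + t * η (f x) (f y) - c * t * (1 - t) * (x - y)^2)
    (hM : ∀ u ∈ f '' Set.Icc a b, ∀ v ∈ f '' Set.Icc a b, η u v ≤ M) :
    f ((a + b) / 2) - M / 2 ≤ (1 / (b - a)) * ∫ x in a..b, f x - (c / 12) * (b - a)^2 := by
  have hb : (0:ℝ) < b - a := by linarith
  have huIcc : Set.uIcc a b = Set.Icc a b := Set.uIcc_of_le hab.le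
  -- maps
  have hmap : ∀ x ∈ Set.Icc a b, a + b - x ∈ Set.Icc a b := by
    intro x hx
    simp only [Set.mem_Icc] at *
    constructor <;> linarith [hx.1, hx.2]
  -- pointwise inequality
  have h1 : ∀ x ∈ Set.Icc a b,
      f ((a + b) / 2) ≤ f (a + b - x) + M / 2 - (c / 4) * (2 * x - a - b)^2 := by
    intro x hx
    have hy := hmap x hx
    have ht : (1/2 : ℝ) ∈ Set.Icc (0:ℝ) 1 := by norm_num
    have h := hf x hx (a + b - x) hy (1/2) ht
    have harg : (1/2 : ℝ) * x + (1 - 1/2) * (a + b - x) = (a + b) / 2 := by ring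
    rw [harg] at h
    have hMle : η (f x) (f (a + b - x)) ≤ M :=
      hM _ ⟨x, hx, rfl⟩ _ ⟨a + b - x, hy, rfl⟩
    nlinarith [h, hMle]
  -- integrability
  have hcont' : ContinuousOn f (Set.uIcc a b) := by rw [huIcc]; exact hcont
  have hIf : IntervalIntegrable f MeasureTheory.volume a b := hcont'.intervalIntegrable
  have hcontg : ContinuousOn (fun x => f (a + b - x) + M / 2 - (c / 4) * (2 * x - a - b)^2)
      (Set.Icc a b) := by
    apply ContinuousOn.sub
    · apply ContinuousOn.add
      · exact hcont.comp (continuous_const.sub continuous_id).continuousOn hmap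
      · exact continuousOn_const
    · exact Continuous.continuousOn (by fun_prop)
  have hIg : IntervalIntegrable (fun x => f (a + b - x) + M / 2 - (c / 4) * (2 * x - a - b)^2)
      MeasureTheory.volume a b := by
    apply ContinuousOn.intervalIntegrable
    rw [huIcc]; exact hcontg
  -- integral inequality
  have hmono : ∫ x in a..b, f ((a + b) / 2) ≤
      ∫ x in a..b, (f (a + b - x) + M / 2 - (c / 4) * (2 * x - a - b)^2) := by
    apply intervalIntegral.integral_mono_on hab.le (intervalIntegrable_const) hIg
    exact h1
  -- compute parts
  have hsub : (∫ x in a..b, f (a + b - x)) = ∫ x in a..b, f x := by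
    have := intervalIntegral.integral_comp_sub_left (a := a) (b := b) f (a + b)
    simpa using this
  have hpoly : (∫ x in a..b, (2 * x - a - b)^2) = (b - a)^3 / 3 := by
    have hderiv : ∀ x ∈ Set.uIcc a b,
        HasDerivAt (fun x => (2 * x - a - b)^3 / 6) ((2 * x - a - b)^2) x := by
      intro x _
      have h := ((((hasDerivAt_id x).const_mul (2:ℝ)).sub_const (a + b)).pow 3).div_const 6
      refine (h.congr_deriv ?_).congr_of_eventuallyEq (Filter.Eventually.of_forall fun y => ?_)
      · simp only [id_eq]; push_cast; ring
      · simp only [id_eq, Pi.pow_apply]; ring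
    have hint : IntervalIntegrable (fun x => (2 * x - a - b)^2) MeasureTheory.volume a b :=
      (Continuous.intervalIntegrable (by fun_prop) a b)
    have := intervalIntegral.integral_eq_sub_of_hasDerivAt hderiv hint
    rw [this]; ring
  have hIconst : IntervalIntegrable (fun _ : ℝ => M / 2) MeasureTheory.volume a b :=
    intervalIntegrable_const
  have hIf2 : IntervalIntegrable (fun x => f (a + b - x)) MeasureTheory.volume a b := by
    apply ContinuousOn.intervalIntegrable
    rw [huIcc]
    exact hcont.comp (continuous_const.sub continuous_id).continuousOn hmap
  have hIp : IntervalIntegrable (fun x => (c / 4) * (2 * x - a - b)^2) MeasureTheory.volume a b :=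
    (Continuous.intervalIntegrable (by fun_prop) a b)
  have hsplit : (∫ x in a..b, (f (a + b - x) + M / 2 - (c / 4) * (2 * x - a - b)^2)) =
      (∫ x in a..b, f x) + (b - a) * (M / 2) - (c / 4) * ((b - a)^3 / 3) := by
    rw [intervalIntegral.integral_sub (hIf2.add hIconst) hIp,
        intervalIntegral.integral_add hIf2 hIconst,
        intervalIntegral.integral_const_mul, hsub, hpoly]
    simp [smul_eq_mul]
    ring
  have hconst : (∫ _ in a..b, f ((a + b) / 2)) = (b - a) * f ((a + b) / 2) := by
    simp [smul_eq_mul]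
  rw [hconst, hsplit] at hmono
  have hk : (∫ x in a..b, (f x - (c / 12) * (b - a)^2)) =
      (∫ x in a..b, f x) - (b - a) * ((c / 12) * (b - a)^2) := by
    rw [intervalIntegral.integral_sub hIf intervalIntegrable_const]
    simp [smul_eq_mul]
    ring
  rw [one_div, inv_mul_eq_div, le_div_iff₀ hb, hk]
  nlinarith [hmono]
end

section
/- Let a < b, c ≥ 0, and let f : [a,b] → ℝ be continuous and strongly η-convex with respect to η and modulus c. Then (1/(b−a)) ∫_a^b f(x) dx ≤ f(b) + (1/2)·η(f(a), f(b)) − (c/6)·(b−a)². -/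
theorem stmt_8 (a b c : ℝ) (hab : a < b) (hc : 0 ≤ c)
    (f : ℝ → ℝ) (η : ℝ → ℝ → ℝ)
    (hcont : ContinuousOn f (Set.Icc a b))
    (hf : ∀ x ∈ Set.Icc a b, ∀ y ∈ Set.Icc a b, ∀ t ∈ Set.Icc (0:ℝ) 1,
      f (t * x + (1 - t) * y) ≤ f y + t * η (f x) (f y) - c * t * (1 - t) * (x - y)^2) :
    (1 / (b - a)) * ∫ x in a..b, f x ≤
      f b + (1 / 2) * η (f a) (f b) - (c / 6) * (b - a)^2 := by
  have hba : (0:ℝ) < b - a := by linarith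
  have hne : a - b ≠ 0 := by linarith
  have hmap : ∀ t ∈ Set.Icc (0:ℝ) 1, (a - b) * t + b ∈ Set.Icc a b := by
    intro t ht
    constructor
    · nlinarith [ht.1, ht.2]
    · nlinarith [ht.1, ht.2]
  have hgc : ContinuousOn (fun t => f ((a - b) * t + b)) (Set.Icc 0 1) := by
    apply hcont.comp (Continuous.continuousOn (by fun_prop)) hmap
  have hgi : IntervalIntegrable (fun t => f ((a - b) * t + b)) MeasureTheory.volume 0 1 := by
    apply ContinuousOn.intervalIntegrable
    rwa [Set.uIcc_of_le (by norm_num : (0:ℝ) ≤ 1)]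
  have hRi : IntervalIntegrable
      (fun t => f b + t * η (f a) (f b) - c * t * (1 - t) * (a - b)^2)
      MeasureTheory.volume 0 1 := by
    apply Continuous.intervalIntegrable
    continuity
  have key : (∫ t in (0:ℝ)..1, f ((a - b) * t + b)) ≤
      ∫ t in (0:ℝ)..1, (f b + t * η (f a) (f b) - c * t * (1 - t) * (a - b)^2) := by
    apply intervalIntegral.integral_mono_on (by norm_num) hgi hRi
    intro t ht
    have h := hf a ⟨le_refl a, le_of_lt hab⟩ b ⟨le_of_lt hab, le_refl b⟩ t ht
    have : t * a + (1 - t) * b = (a - b) * t + b := by ring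
    rw [this] at h
    exact h
  have hR : (∫ t in (0:ℝ)..1, (f b + t * η (f a) (f b) - c * t * (1 - t) * (a - b)^2))
      = f b + (1/2) * η (f a) (f b) - (c/6) * (a - b)^2 := by
    have h1 : (fun t : ℝ => f b + t * η (f a) (f b) - c * t * (1 - t) * (a - b)^2)
        = fun t : ℝ => (f b) + t * (η (f a) (f b) - c * (a-b)^2) + t^2 * (c * (a-b)^2) := by
      funext t; ring
    rw [h1]
    rw [intervalIntegral.integral_add, intervalIntegral.integral_add]
    · rw [intervalIntegral.integral_mul_const, intervalIntegral.integral_mul_const,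
        integral_id, integral_pow, intervalIntegral.integral_const]
      norm_num
      ring
    · exact Continuous.intervalIntegrable (by fun_prop) _ _
    · exact Continuous.intervalIntegrable (by fun_prop) _ _
    · exact Continuous.intervalIntegrable (by fun_prop) _ _
    · exact Continuous.intervalIntegrable (by fun_prop) _ _
  have hL : (∫ t in (0:ℝ)..1, f ((a - b) * t + b))
      = (a - b)⁻¹ * ∫ x in b..a, f x := by
    have := intervalIntegral.integral_comp_mul_add (a := 0) (b := 1) f hne b
    simpa using this
  rw [hL, intervalIntegral.integral_symm] at key
  have hsq : (a - b)^2 = (b - a)^2 := by ring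
  rw [hR, hsq] at key
  have : (1 / (b - a)) * ∫ x in a..b, f x = (a - b)⁻¹ * -∫ x in a..b, f x := by
    field_simp
    ring
  rw [this]
  exact key
end

section
/- Let a < b, c ≥ 0, and let f : [a,b] → ℝ be continuous and strongly η-convex with respect to η and modulus c. Then (1/(b−a)) ∫_a^b f(x) dx ≤ (f(a)+f(b))/2 + (η(f(a),f(b)) + η(f(b),f(a)))/4 − (c/6)·(b−a)². -/
theorem stmt_9 (a b c : ℝ) (hab : a < b) (hc : 0 ≤ c)
    (f : ℝ → ℝ) (η : ℝ → ℝ → ℝ)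
    (hcont : ContinuousOn f (Set.Icc a b))
    (hf : ∀ x ∈ Set.Icc a b, ∀ y ∈ Set.Icc a b, ∀ t ∈ Set.Icc (0:ℝ) 1,
      f (t * x + (1 - t) * y) ≤ f y + t * η (f x) (f y) - c * t * (1 - t) * (x - y)^2) :
    (1 / (b - a)) * ∫ x in a..b, f x ≤
      (f a + f b) / 2 + (η (f a) (f b) + η (f b) (f a)) / 4 - (c / 6) * (b - a)^2 := by
  have hba : (0:ℝ) < b - a := by linarith
  have hne : b - a ≠ 0 := ne_of_gt hba
  set A := η (f a) (f b) with hA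
  set B := η (f b) (f a) with hB
  set K : ℝ := (f a + f b) / 2 + (b * A - a * B) / (2 * (b - a)) + c * a * b with hK
  set L : ℝ := (B - A) / (2 * (b - a)) - c * (a + b) with hL
  have ha : a ∈ Set.Icc a b := ⟨le_refl a, hab.le⟩
  have hb : b ∈ Set.Icc a b := ⟨hab.le, le_refl b⟩
  have key : ∀ x ∈ Set.Icc a b, f x ≤ K + L * x + c * x ^ 2 := by
    intro x hx
    obtain ⟨hax, hxb⟩ := hx
    have ht1 : (b - x) / (b - a) ∈ Set.Icc (0:ℝ) 1 := by
      constructor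
      · apply div_nonneg (by linarith) hba.le
      · rw [div_le_one hba]; linarith
    have ht2 : (x - a) / (b - a) ∈ Set.Icc (0:ℝ) 1 := by
      constructor
      · apply div_nonneg (by linarith) hba.le
      · rw [div_le_one hba]; linarith
    have h1 := hf a ha b hb ((b - x) / (b - a)) ht1
    have h2 := hf b hb a ha ((x - a) / (b - a)) ht2
    have e1 : (b - x) / (b - a) * a + (1 - (b - x) / (b - a)) * b = x := by
      field_simp; ring
    have e2 : (x - a) / (b - a) * b + (1 - (x - a) / (b - a)) * a = x := by
      field_simp; ring
    rw [e1] at h1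
    rw [e2] at h2
    have c1 : c * ((b - x) / (b - a)) * (1 - (b - x) / (b - a)) * (a - b) ^ 2
        = c * (b - x) * (x - a) := by field_simp; ring
    have c2 : c * ((x - a) / (b - a)) * (1 - (x - a) / (b - a)) * (b - a) ^ 2
        = c * (x - a) * (b - x) := by field_simp; ring
    rw [c1] at h1
    rw [c2] at h2
    have heq : K + L * x + c * x ^ 2
        = (f b + (b - x) / (b - a) * A) / 2 + (f a + (x - a) / (b - a) * B) / 2
          - c * (b - x) * (x - a) := by
      rw [hK, hL]; field_simp; ring
    rw [heq]
    linarith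
  have hintf : IntervalIntegrable f MeasureTheory.volume a b := by
    apply ContinuousOn.intervalIntegrable
    rwa [Set.uIcc_of_le hab.le]
  have hg : Continuous fun x : ℝ => K + L * x + c * x ^ 2 :=
    (continuous_const.add (continuous_const.mul continuous_id)).add
      (continuous_const.mul (continuous_pow 2))
  have hintg : IntervalIntegrable (fun x : ℝ => K + L * x + c * x ^ 2)
      MeasureTheory.volume a b := hg.intervalIntegrable a b
  have hmono : (∫ x in a..b, f x) ≤ ∫ x in a..b, (K + L * x + c * x ^ 2) :=
    intervalIntegral.integral_mono_on hab.le hintf hintg key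
  have iK : IntervalIntegrable (fun _ : ℝ => K) MeasureTheory.volume a b :=
    intervalIntegrable_const
  have iL : IntervalIntegrable (fun x : ℝ => L * x) MeasureTheory.volume a b :=
    (continuous_const.mul continuous_id : Continuous fun x : ℝ => L * x).intervalIntegrable a b
  have iC : IntervalIntegrable (fun x : ℝ => c * x ^ 2) MeasureTheory.volume a b :=
    (continuous_const.mul (continuous_pow 2) : Continuous fun x : ℝ => c * x ^ 2).intervalIntegrable a b
  have hval : (∫ x in a..b, (K + L * x + c * x ^ 2))
      = K * (b - a) + L * (b ^ 2 - a ^ 2) / 2 + c * (b ^ 3 - a ^ 3) / 3 := by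
    rw [intervalIntegral.integral_add (iK.add iL) iC, intervalIntegral.integral_add iK iL,
      intervalIntegral.integral_const, intervalIntegral.integral_const_mul,
      intervalIntegral.integral_const_mul, integral_id, integral_pow]
    push_cast
    rw [smul_eq_mul]
    ring
  have hI : K * (b - a) + L * (b ^ 2 - a ^ 2) / 2 + c * (b ^ 3 - a ^ 3) / 3
      = (b - a) * ((f a + f b) / 2 + (A + B) / 4 - (c / 6) * (b - a) ^ 2) := by
    rw [hK, hL]; field_simp; ring
  have hfin : (∫ x in a..b, f x)
      ≤ (b - a) * ((f a + f b) / 2 + (A + B) / 4 - (c / 6) * (b - a) ^ 2) := by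
    rw [← hI]; linarith [hmono, hval.le, hval.ge]
  rw [div_mul_eq_mul_div, div_le_iff₀ hba] at *
  linarith [hfin]
end

section
/- Let a < b, c ≥ 0, and let f : [a,b] → ℝ be continuous and strongly η-convex with respect to η and modulus c. If η(u, v) ≤ M for all u, v ∈ f([a,b]), then (1/(b−a)) ∫_a^b f(x) dx ≤ (f(a)+f(b))/2 + M/2 − (c/6)·(b−a)². -/
theorem stmt_10 (a b c M : ℝ) (hab : a < b) (hc : 0 ≤ c)
    (f : ℝ → ℝ) (η : ℝ → ℝ → ℝ)
    (hcont : ContinuousOn f (Set.Icc a b))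
    (hf : ∀ x ∈ Set.Icc a b, ∀ y ∈ Set.Icc a b, ∀ t ∈ Set.Icc (0:ℝ) 1,
      f (t * x + (1 - t) * y) ≤ f y + t * η (f x) (f y) - c * t * (1 - t) * (x - y)^2)
    (hM : ∀ u ∈ f '' Set.Icc a b, ∀ v ∈ f '' Set.Icc a b, η u v ≤ M) :
    (1 / (b - a)) * ∫ x in a..b, f x ≤
      (f a + f b) / 2 + M / 2 - (c / 6) * (b - a)^2 := by
  have hba : 0 < b - a := sub_pos.mpr hab
  set C : ℝ := (f a + f b) / 2 + M / 2 with hC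
  have ha : a ∈ Set.Icc a b := ⟨le_refl a, hab.le⟩
  have hb : b ∈ Set.Icc a b := ⟨hab.le, le_refl b⟩
  have hM1 : η (f a) (f b) ≤ M := hM _ ⟨a, ha, rfl⟩ _ ⟨b, hb, rfl⟩
  have hM2 : η (f b) (f a) ≤ M := hM _ ⟨b, hb, rfl⟩ _ ⟨a, ha, rfl⟩
  have hpt : ∀ x ∈ Set.Icc a b, f x ≤ C - c * ((b - x) * (x - a)) := by
    intro x hx
    obtain ⟨hax, hxb⟩ := hx
    set t : ℝ := (b - x) / (b - a) with ht
    set s : ℝ := (x - a) / (b - a) with hs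
    have ht0 : 0 ≤ t := div_nonneg (by linarith) hba.le
    have hs0 : 0 ≤ s := div_nonneg (by linarith) hba.le
    have hts : t + s = 1 := by rw [ht, hs, ← add_div, div_eq_one_iff_eq hba.ne']; ring
    have ht1 : t ≤ 1 := by linarith
    have hs1 : s ≤ 1 := by linarith
    have hxt : t * a + (1 - t) * b = x := by
      have h' : t * (b - a) = b - x := by rw [ht]; exact div_mul_cancel₀ _ hba.ne'
      linear_combination -h'
    have hxs : s * b + (1 - s) * a = x := by
      have h' : s * (b - a) = x - a := by rw [hs]; exact div_mul_cancel₀ _ hba.ne'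
      linear_combination h'
    have h1 := hf a ha b hb t ⟨ht0, ht1⟩
    have h2 := hf b hb a ha s ⟨hs0, hs1⟩
    rw [hxt] at h1
    rw [hxs] at h2
    have htb : t * (b - a) = b - x := by rw [ht]; exact div_mul_cancel₀ _ hba.ne'
    have hsb : s * (b - a) = x - a := by rw [hs]; exact div_mul_cancel₀ _ hba.ne'
    have hkey : (b - x) * (x - a) = t * s * (b - a)^2 := by
      rw [← htb, ← hsb]; ring
    have e1 : t * η (f a) (f b) ≤ t * M := mul_le_mul_of_nonneg_left hM1 ht0
    have e2 : s * η (f b) (f a) ≤ s * M := mul_le_mul_of_nonneg_left hM2 hs0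
    have h1s : (1:ℝ) - t = s := by linarith
    have h2s : (1:ℝ) - s = t := by linarith
    rw [h1s] at h1
    rw [h2s] at h2
    have hab2 : (a - b)^2 = (b - a)^2 := by ring
    rw [hab2] at h1
    have hba2 : (b - a)^2 = (b - a)^2 := rfl
    -- average of h1 and h2
    have : 2 * f x ≤ f a + f b + t * M + s * M - 2 * c * (t * s * (b - a)^2) := by
      nlinarith [h1, h2, e1, e2]
    rw [hkey]
    have : f x ≤ (f a + f b) / 2 + (t + s) * M / 2 - c * (t * s * (b - a)^2) := by
      nlinarith [this]
    rw [hts] at this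
    rw [hC]
    linarith [this]
  have hint_f : IntervalIntegrable f MeasureTheory.volume a b := by
    apply ContinuousOn.intervalIntegrable
    rwa [Set.uIcc_of_le hab.le]
  have hcontg : Continuous fun x : ℝ => C - c * ((b - x) * (x - a)) := by fun_prop
  have hint_g : IntervalIntegrable (fun x : ℝ => C - c * ((b - x) * (x - a)))
      MeasureTheory.volume a b := hcontg.intervalIntegrable a b
  have hmono : (∫ x in a..b, f x) ≤ ∫ x in a..b, (C - c * ((b - x) * (x - a))) :=
    intervalIntegral.integral_mono_on hab.le hint_f hint_g hpt
  have hg : (∫ x in a..b, (C - c * ((b - x) * (x - a))))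
      = (b - a) * (C - c / 6 * (b - a)^2) := by
    have heq : (fun x : ℝ => C - c * ((b - x) * (x - a)))
        = fun x : ℝ => c * x ^ 2 - (c * (a + b)) * x + (C + c * (a * b)) := by
      funext x; ring
    rw [heq]
    rw [intervalIntegral.integral_add, intervalIntegral.integral_sub,
      intervalIntegral.integral_const_mul, intervalIntegral.integral_const_mul,
      integral_pow, integral_id,
      intervalIntegral.integral_const]
    · push_cast; field_simp; ring
    · exact (Continuous.intervalIntegrable (by fun_prop) a b)
    · exact (Continuous.intervalIntegrable (by fun_prop) a b)
    · exact (Continuous.intervalIntegrable (by fun_prop) a b)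
    · exact (Continuous.intervalIntegrable (by fun_prop) a b)
  rw [hg] at hmono
  rw [one_div]
  rw [inv_mul_le_iff₀ hba]
  calc (∫ x in a..b, f x) ≤ (b - a) * (C - c / 6 * (b - a)^2) := hmono
    _ = (b - a) * (C - c / 6 * (b - a) ^ 2) := by ring
end

section
/- Let a < b, c ≥ 0, let f : [a,b] → ℝ be continuous and strongly η-convex with respect to η and modulus c, and let w : [a,b] → ℝ be continuous, nonnegative, and symmetric with respect to (a+b)/2. Then f((a+b)/2)·∫_a^b w(x) dx − (1/2)·∫_a^b η(f(a+b−x), f(x))·w(x) dx + (c/4)·∫_a^b (a+b−2x)²·w(x) dx ≤ ∫_a^b f(x)·w(x) dx. -/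
theorem stmt_13 (a b c : ℝ) (hab : a < b) (hc : 0 ≤ c)
    (f w : ℝ → ℝ) (η : ℝ → ℝ → ℝ)
    (hfc : ContinuousOn f (Set.Icc a b))
    (hηc : Continuous fun p : ℝ × ℝ => η p.1 p.2)
    (hf : ∀ x ∈ Set.Icc a b, ∀ y ∈ Set.Icc a b, ∀ t ∈ Set.Icc (0:ℝ) 1,
      f (t * x + (1 - t) * y) ≤ f y + t * η (f x) (f y) - c * t * (1 - t) * (x - y)^2)
    (hwc : ContinuousOn w (Set.Icc a b))
    (hwnn : ∀ x ∈ Set.Icc a b, 0 ≤ w x)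
    (hwsym : ∀ x ∈ Set.Icc a b, w x = w (a + b - x)) :
    f ((a + b) / 2) * (∫ x in a..b, w x)
      - (1 / 2) * (∫ x in a..b, η (f (a + b - x)) (f x) * w x)
      + (c / 4) * ∫ x in a..b, (a + b - 2 * x)^2 * w x
    ≤ ∫ x in a..b, f x * w x := by
  have hab' : a ≤ b := hab.le
  have huIcc : Set.uIcc a b = Set.Icc a b := Set.uIcc_of_le hab'
  have hrefl : ContinuousOn (fun x : ℝ => a + b - x) (Set.Icc a b) := by
    fun_prop
  have hmaps : ∀ x ∈ Set.Icc a b, a + b - x ∈ Set.Icc a b := by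
    intro x hx
    simp only [Set.mem_Icc] at hx ⊢
    constructor <;> linarith [hx.1, hx.2]
  have hfc' : ContinuousOn (fun x => f (a + b - x)) (Set.Icc a b) :=
    hfc.comp hrefl hmaps
  have hηcx : ContinuousOn (fun x => η (f (a + b - x)) (f x)) (Set.Icc a b) := by
    exact hηc.comp_continuousOn (hfc'.prodMk hfc)
  have h1 : IntervalIntegrable w MeasureTheory.volume a b :=
    (hwc.mono (by rw [huIcc])).intervalIntegrable
  have h2 : IntervalIntegrable (fun x => η (f (a + b - x)) (f x) * w x)
      MeasureTheory.volume a b :=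
    ((hηcx.mul hwc).mono (by rw [huIcc])).intervalIntegrable
  have h3 : IntervalIntegrable (fun x => (a + b - 2 * x)^2 * w x)
      MeasureTheory.volume a b := by
    apply ContinuousOn.intervalIntegrable
    rw [huIcc]
    exact (ContinuousOn.pow (by fun_prop) 2).mul hwc
  have h4 : IntervalIntegrable (fun x => f x * w x) MeasureTheory.volume a b :=
    ((hfc.mul hwc).mono (by rw [huIcc])).intervalIntegrable
  have key : ∫ x in a..b,
      (f ((a + b) / 2) * w x - (1 / 2) * (η (f (a + b - x)) (f x) * w x)
        + (c / 4) * ((a + b - 2 * x)^2 * w x))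
      ≤ ∫ x in a..b, f x * w x := by
    apply intervalIntegral.integral_mono_on hab'
    · exact ((h1.const_mul _).sub (h2.const_mul _)).add (h3.const_mul _)
    · exact h4
    · intro x hx
      have hx' := hmaps x hx
      have := hf (a + b - x) hx' x hx (1/2) (by norm_num)
      have heq : (1/2 : ℝ) * (a + b - x) + (1 - 1/2) * x = (a + b) / 2 := by ring
      rw [heq] at this
      have hw := hwnn x hx
      nlinarith [mul_le_mul_of_nonneg_right this hw]
  calc f ((a + b) / 2) * (∫ x in a..b, w x)
      - (1 / 2) * (∫ x in a..b, η (f (a + b - x)) (f x) * w x)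
      + (c / 4) * ∫ x in a..b, (a + b - 2 * x)^2 * w x
      = ∫ x in a..b,
        (f ((a + b) / 2) * w x - (1 / 2) * (η (f (a + b - x)) (f x) * w x)
          + (c / 4) * ((a + b - 2 * x)^2 * w x)) := by
        rw [intervalIntegral.integral_add ((h1.const_mul _).sub (h2.const_mul _))
            (h3.const_mul _),
          intervalIntegral.integral_sub (h1.const_mul _) (h2.const_mul _),
          intervalIntegral.integral_const_mul, intervalIntegral.integral_const_mul,
          intervalIntegral.integral_const_mul]
    _ ≤ ∫ x in a..b, f x * w x := key
end

section
/- Let a < b, c ≥ 0, and f : [a,b] → ℝ continuous and strongly η-convex with respect to η and modulus c. Then (1/(b−a)) ∫_a^b f(x) dx ≤ min( f(b) + (1/2)·η(f(a), f(b)), f(a) + (1/2)·η(f(b), f(a)) ) − (c/6)·(b−a)². -/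
open intervalIntegral

lemma aux18 (a b c : ℝ) (hab : a < b) (hc : 0 ≤ c)
    (f : ℝ → ℝ) (E K : ℝ) (hK : 0 ≤ K)
    (hcont : ContinuousOn f (Set.Icc a b)) (x y : ℝ)
    (hx : x ∈ Set.Icc a b) (hy : y ∈ Set.Icc a b)
    (hb : ∀ t ∈ Set.Icc (0:ℝ) 1,
      f (t * x + (1 - t) * y) ≤ f y + t * E - c * t * (1 - t) * K) :
    ∫ t in (0:ℝ)..1, f (t * x + (1 - t) * y) ≤ f y + (1/2) * E - (c/6) * K := by
  have hmem : ∀ t ∈ Set.Icc (0:ℝ) 1, t * x + (1 - t) * y ∈ Set.Icc a b := by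
    intro t ht
    have h1t : 0 ≤ 1 - t := by linarith [ht.2]
    constructor
    · nlinarith [mul_le_mul_of_nonneg_left hx.1 ht.1, mul_le_mul_of_nonneg_left hy.1 h1t]
    · nlinarith [mul_le_mul_of_nonneg_left hx.2 ht.1, mul_le_mul_of_nonneg_left hy.2 h1t]
  have hcont1 : ContinuousOn (fun t : ℝ => f (t * x + (1 - t) * y)) (Set.Icc 0 1) :=
    hcont.comp (by fun_prop) hmem
  have hint1 : IntervalIntegrable (fun t : ℝ => f (t * x + (1 - t) * y))
      MeasureTheory.volume 0 1 :=
    hcont1.intervalIntegrable_of_Icc (by norm_num)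
  have hint2 : IntervalIntegrable (fun t : ℝ => f y + t * E - c * t * (1 - t) * K)
      MeasureTheory.volume 0 1 := (by fun_prop : Continuous _).intervalIntegrable 0 1
  have hmono := intervalIntegral.integral_mono_on (by norm_num : (0:ℝ) ≤ 1) hint1 hint2 hb
  refine hmono.trans (le_of_eq ?_)
  have : (fun t : ℝ => f y + t * E - c * t * (1 - t) * K)
      = fun t : ℝ => (c*K) * t^2 + ((E - c*K) * t + f y) := by
    funext t; ring
  rw [this, intervalIntegral.integral_add, intervalIntegral.integral_add,
    intervalIntegral.integral_const_mul, intervalIntegral.integral_const_mul,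
    integral_pow, integral_id]
  · norm_num; ring
  all_goals exact Continuous.intervalIntegrable (by fun_prop) 0 1

theorem stmt_18 (a b c : ℝ) (hab : a < b) (hc : 0 ≤ c)
    (f : ℝ → ℝ) (η : ℝ → ℝ → ℝ)
    (hcont : ContinuousOn f (Set.Icc a b))
    (hf : ∀ x ∈ Set.Icc a b, ∀ y ∈ Set.Icc a b, ∀ t ∈ Set.Icc (0:ℝ) 1,
      f (t * x + (1 - t) * y) ≤ f y + t * η (f x) (f y) - c * t * (1 - t) * (x - y)^2) :
    (1 / (b - a)) * ∫ x in a..b, f x ≤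
      min (f b + (1 / 2) * η (f a) (f b)) (f a + (1 / 2) * η (f b) (f a))
        - (c / 6) * (b - a)^2 := by
  have ha : a ∈ Set.Icc a b := Set.left_mem_Icc.2 hab.le
  have hbm : b ∈ Set.Icc a b := Set.right_mem_Icc.2 hab.le
  have hK : (0:ℝ) ≤ (b - a)^2 := sq_nonneg _
  have hne : b - a ≠ 0 := by linarith
  have hne' : a - b ≠ 0 := by linarith
  have h1 : ∫ t in (0:ℝ)..1, f (t * a + (1 - t) * b)
      ≤ f b + (1/2) * η (f a) (f b) - (c/6) * (b - a)^2 := by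
    apply aux18 a b c hab hc f _ _ hK hcont a b ha hbm
    intro t ht
    have h := hf a ha b hbm t ht
    have h2 : c*t*(1-t)*(a-b)^2 = c*t*(1-t)*(b-a)^2 := by ring
    linarith
  have h2 : ∫ t in (0:ℝ)..1, f (t * b + (1 - t) * a)
      ≤ f a + (1/2) * η (f b) (f a) - (c/6) * (b - a)^2 := by
    apply aux18 a b c hab hc f _ _ hK hcont b a hbm ha
    intro t ht
    exact hf b hbm a ha t ht
  have e1 : ∫ t in (0:ℝ)..1, f (t * a + (1 - t) * b)
      = (1 / (b - a)) * ∫ x in a..b, f x := by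
    have h : (fun t : ℝ => f (t * a + (1 - t) * b)) = fun t => f ((a - b) * t + b) := by
      funext t; ring_nf
    rw [h, intervalIntegral.integral_comp_mul_add f hne' b]
    simp [intervalIntegral.integral_symm b a]
    field_simp
    ring
  have e2 : ∫ t in (0:ℝ)..1, f (t * b + (1 - t) * a)
      = (1 / (b - a)) * ∫ x in a..b, f x := by
    have h : (fun t : ℝ => f (t * b + (1 - t) * a)) = fun t => f ((b - a) * t + a) := by
      funext t; ring_nf
    rw [h, intervalIntegral.integral_comp_mul_add f hne a]
    simp
  rw [e1] at h1
  rw [e2] at h2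
  calc (1 / (b - a)) * ∫ x in a..b, f x
      ≤ min (f b + (1/2) * η (f a) (f b) - (c/6) * (b - a)^2)
          (f a + (1/2) * η (f b) (f a) - (c/6) * (b - a)^2) := le_min h1 h2
    _ = _ := min_sub_sub_right _ _ _
end

section
/- Let a < b, c ≥ 0, and suppose f : [a,b] → ℝ is continuous, strongly η-convex with modulus c, and η(u,v) ≤ M on f([a,b])². Combining both sides of the Hermite–Hadamard inequality yields: f((a+b)/2) − M/2 + (c/12)(b−a)² ≤ (1/(b−a)) ∫_a^b f(x) dx ≤ (f(a)+f(b))/2 + M/2 − (c/6)(b−a)². -/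
theorem stmt_19 (a b c M : ℝ) (hab : a < b) (hc : 0 ≤ c)
    (f : ℝ → ℝ) (η : ℝ → ℝ → ℝ)
    (hcont : ContinuousOn f (Set.Icc a b))
    (hf : ∀ x ∈ Set.Icc a b, ∀ y ∈ Set.Icc a b, ∀ t ∈ Set.Icc (0:ℝ) 1,
      f (t * x + (1 - t) * y) ≤ f y + t * η (f x) (f y) - c * t * (1 - t) * (x - y)^2)
    (hM : ∀ u ∈ f '' Set.Icc a b, ∀ v ∈ f '' Set.Icc a b, η u v ≤ M) :
    f ((a + b) / 2) - M / 2 + (c / 12) * (b - a)^2 ≤ (1 / (b - a)) * ∫ x in a..b, f x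
    ∧ (1 / (b - a)) * ∫ x in a..b, f x ≤ (f a + f b) / 2 + M / 2 - (c / 6) * (b - a)^2 := by
  have hD : (0:ℝ) < b - a := sub_pos.2 hab
  have ha : a ∈ Set.Icc a b := ⟨le_refl a, hab.le⟩
  have hb : b ∈ Set.Icc a b := ⟨hab.le, le_refl b⟩
  -- membership of affine images
  have hmem : ∀ t ∈ Set.Icc (0:ℝ) 1, (b - a) * t + a ∈ Set.Icc a b := by
    intro t ht
    constructor
    · nlinarith [ht.1, ht.2]
    · nlinarith [ht.1, ht.2]
  -- M bounds η on relevant values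
  have hMb : ∀ x ∈ Set.Icc a b, ∀ y ∈ Set.Icc a b, η (f x) (f y) ≤ M := by
    intro x hx y hy
    exact hM _ ⟨x, hx, rfl⟩ _ ⟨y, hy, rfl⟩
  -- M is nonnegative
  have hM0 : 0 ≤ M := by
    have h := hf a ha a ha 1 ⟨zero_le_one, le_refl 1⟩
    simp at h
    have := hMb a ha a ha
    linarith
  -- integrability
  have hconth : ContinuousOn (fun t => f ((b - a) * t + a)) (Set.Icc 0 1) := by
    exact hcont.comp (Continuous.continuousOn (by fun_prop)) hmem
  have hint : IntervalIntegrable (fun t => f ((b - a) * t + a)) MeasureTheory.volume 0 1 := by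
    apply ContinuousOn.intervalIntegrable
    rwa [Set.uIcc_of_le (by norm_num : (0:ℝ) ≤ 1)]
  -- change of variables
  have hJ : ∫ t in (0:ℝ)..1, f ((b - a) * t + a) = (b - a)⁻¹ * ∫ x in a..b, f x := by
    rw [intervalIntegral.integral_comp_mul_add f (ne_of_gt hD) a]
    norm_num
  -- Left inequality: pointwise bound
  have hptL : ∀ t ∈ Set.Icc (0:ℝ) 1,
      f ((a + b) / 2) - M / 2 + (c / 4) * (b - a)^2 * (1 - 2 * t)^2
        ≤ f ((b - a) * t + a) := by
    intro t ht
    have hx := hmem (1 - t) ⟨by linarith [ht.2], by linarith [ht.1]⟩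
    have hy := hmem t ht
    have h := hf ((b - a) * (1 - t) + a) hx ((b - a) * t + a) hy (1/2)
      ⟨by norm_num, by norm_num⟩
    have hη := hMb ((b - a) * (1 - t) + a) hx ((b - a) * t + a) hy
    have e1 : (1/2 : ℝ) * ((b - a) * (1 - t) + a) + (1 - 1/2) * ((b - a) * t + a)
        = (a + b) / 2 := by ring
    rw [e1] at h
    nlinarith [h, hη]
  -- Right inequality: pointwise bound
  have hptR : ∀ t ∈ Set.Icc (0:ℝ) 1,
      f ((b - a) * t + a) ≤ (f a + f b) / 2 + M / 2 - c * (b - a)^2 * (t - t^2) := by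
    intro t ht
    have h1 := hf b hb a ha t ht
    have h2 := hf a ha b hb (1 - t) ⟨by linarith [ht.2], by linarith [ht.1]⟩
    have e1 : t * b + (1 - t) * a = (b - a) * t + a := by ring
    have e2 : (1 - t) * a + (1 - (1 - t)) * b = (b - a) * t + a := by ring
    rw [e1] at h1
    rw [e2] at h2
    have hη1 := hMb b hb a ha
    have hη2 := hMb a ha b hb
    nlinarith [h1, h2, ht.1, ht.2, mul_le_mul_of_nonneg_left hη1 ht.1,
      mul_le_mul_of_nonneg_left hη2 (by linarith [ht.2] : (0:ℝ) ≤ 1 - t)]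
  -- integrate the left bound
  have hL : f ((a + b) / 2) - M / 2 + (c / 12) * (b - a)^2
      ≤ ∫ t in (0:ℝ)..1, f ((b - a) * t + a) := by
    have hmono := intervalIntegral.integral_mono_on (by norm_num : (0:ℝ) ≤ 1)
      (by apply Continuous.intervalIntegrable; fun_prop :
        IntervalIntegrable (fun t => f ((a + b) / 2) - M / 2 + (c / 4) * (b - a)^2 * (1 - 2 * t)^2)
          MeasureTheory.volume 0 1)
      hint hptL
    have hcomp : ∫ t in (0:ℝ)..1,
        (f ((a + b) / 2) - M / 2 + (c / 4) * (b - a)^2 * (1 - 2 * t)^2)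
        = f ((a + b) / 2) - M / 2 + (c / 12) * (b - a)^2 := by
      have e : (fun t : ℝ => f ((a + b) / 2) - M / 2 + (c / 4) * (b - a)^2 * (1 - 2 * t)^2)
          = fun t : ℝ => (f ((a + b) / 2) - M / 2 + (c / 4) * (b - a)^2)
              + (-(c * (b - a)^2)) * t + (c * (b - a)^2) * t^2 := by
        funext t; ring
      rw [e,
        intervalIntegral.integral_add (by apply Continuous.intervalIntegrable; fun_prop)
          (by apply Continuous.intervalIntegrable; fun_prop),
        intervalIntegral.integral_add (by apply Continuous.intervalIntegrable; fun_prop)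
          (by apply Continuous.intervalIntegrable; fun_prop),
        intervalIntegral.integral_const, intervalIntegral.integral_const_mul,
        intervalIntegral.integral_const_mul, integral_id, integral_pow]
      simp [smul_eq_mul]
      ring
    linarith [hmono, hcomp.symm.le, hcomp.le]
  -- integrate the right bound
  have hR : (∫ t in (0:ℝ)..1, f ((b - a) * t + a))
      ≤ (f a + f b) / 2 + M / 2 - (c / 6) * (b - a)^2 := by
    have hmono := intervalIntegral.integral_mono_on (by norm_num : (0:ℝ) ≤ 1)
      hint
      (by apply Continuous.intervalIntegrable; fun_prop :
        IntervalIntegrable (fun t => (f a + f b) / 2 + M / 2 - c * (b - a)^2 * (t - t^2))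
          MeasureTheory.volume 0 1)
      hptR
    have hcomp : ∫ t in (0:ℝ)..1,
        ((f a + f b) / 2 + M / 2 - c * (b - a)^2 * (t - t^2))
        = (f a + f b) / 2 + M / 2 - (c / 6) * (b - a)^2 := by
      have e : (fun t : ℝ => (f a + f b) / 2 + M / 2 - c * (b - a)^2 * (t - t^2))
          = fun t : ℝ => ((f a + f b) / 2 + M / 2)
              + (-(c * (b - a)^2)) * t + (c * (b - a)^2) * t^2 := by
        funext t; ring
      rw [e,
        intervalIntegral.integral_add (by apply Continuous.intervalIntegrable; fun_prop)
          (by apply Continuous.intervalIntegrable; fun_prop),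
        intervalIntegral.integral_add (by apply Continuous.intervalIntegrable; fun_prop)
          (by apply Continuous.intervalIntegrable; fun_prop),
        intervalIntegral.integral_const, intervalIntegral.integral_const_mul,
        intervalIntegral.integral_const_mul, integral_id, integral_pow]
      simp [smul_eq_mul]
      ring
    linarith [hmono, hcomp.le]
  rw [hJ] at hL hR
  have hinv : (1 / (b - a)) = (b - a)⁻¹ := one_div _
  rw [hinv]
  exact ⟨hL, hR⟩
end
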